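/- The book thickness of a finite connected graph equals the maximum of the book thicknesses of its blocks (maximal nonseparable subgraphs). -/

import Mathlib

open SimpleGraph

/-- Two chords `{a,b}` and `{c,d}` (endpoints sorted) interleave on the spine. -/
def Cross {n : ℕ} (a b c d : Fin n) : Prop :=
  (a < c ∧ c < b ∧ b < d) ∨ (c < a ∧ a < d ∧ d < b)

/-- Crossing of chords with arbitrary endpoint order. -/
def Cross' {n : ℕ} (a b c d : Fin n) : Prop :=
  Cross (min a b) (max a b) (min c d) (max c d)

/-- A `k`-page book embedding: the vertices are placed (injectively) on a spine and every
edge gets one of `k` pages so that edges on the same page do not cross. -/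
def HasBookEmbedding {V : Type} (G : SimpleGraph V) (k : ℕ) : Prop :=
  ∃ (n : ℕ) (ord : V ↪ Fin n) (page : Sym2 V → Fin k),
    ∀ a b c d : V, G.Adj a b → G.Adj c d → page s(a, b) = page s(c, d) →
      ¬ Cross' (ord a) (ord b) (ord c) (ord d)

/-- Book thickness (pagenumber). -/
noncomputable def bookThickness {V : Type} (G : SimpleGraph V) : ℕ :=
  sInf {k | HasBookEmbedding G k}

/-- Reversal of darts, as a permutation. -/
def dartReverse {V : Type} (G : SimpleGraph V) : Equiv.Perm G.Dart :=
  ⟨SimpleGraph.Dart.symm, SimpleGraph.Dart.symm,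
    SimpleGraph.Dart.symm_symm, SimpleGraph.Dart.symm_symm⟩

/-- A rotation system: a permutation of darts which fixes sources and is cyclic
on the darts emanating from each vertex. -/
def IsRotation {V : Type} (G : SimpleGraph V) (ρ : Equiv.Perm G.Dart) : Prop :=
  (∀ d : G.Dart, (ρ d).fst = d.fst) ∧
  (∀ d d' : G.Dart, d.fst = d'.fst → ρ.SameCycle d d')

/-- The face-tracing permutation of a rotation system. -/
def facePerm {V : Type} (G : SimpleGraph V) (ρ : Equiv.Perm G.Dart) : Equiv.Perm G.Dart :=
  ρ * dartReverse G

/-- The number of faces of a rotation system: orbits of the face-tracing permutation,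
plus one face for each isolated vertex. -/
noncomputable def numFaces {V : Type} (G : SimpleGraph V) (ρ : Equiv.Perm G.Dart) : ℕ :=
  Nat.card (MulAction.orbitRel.Quotient (Subgroup.zpowers (facePerm G ρ)) G.Dart) +
    Nat.card {v : V | ∀ w, ¬ G.Adj v w}

/-- A rotation system is planar (genus 0) when Euler's formula `V - E + F = 2C` holds. -/
def IsPlanarRotation {V : Type} (G : SimpleGraph V) (ρ : Equiv.Perm G.Dart) : Prop :=
  IsRotation G ρ ∧
    Nat.card V + numFaces G ρ =
      Nat.card G.edgeSet + 2 * Nat.card G.ConnectedComponent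

/-- A graph is planar when it admits a genus-0 rotation system. -/
def IsPlanar {V : Type} (G : SimpleGraph V) : Prop :=
  ∃ ρ : Equiv.Perm G.Dart, IsPlanarRotation G ρ

/-- A graph is subhamiltonian when it is a subgraph of a planar Hamiltonian graph. -/
def IsSubhamiltonian {V : Type} (G : SimpleGraph V) : Prop :=
  ∃ (W : Type) (_ : Fintype W) (_ : DecidableEq W) (H : SimpleGraph W) (f : V ↪ W),
    IsPlanar H ∧ H.IsHamiltonian ∧ ∀ a b : V, G.Adj a b → H.Adj (f a) (f b)

/-- The cone over a graph: a new apex vertex joined to every old vertex. -/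
def cone {V : Type} (G : SimpleGraph V) : SimpleGraph (Option V) :=
  SimpleGraph.fromRel (fun a b =>
    a = none ∨ ∃ u v : V, a = some u ∧ b = some v ∧ G.Adj u v)

/-- A graph is outerplanar iff the cone over it is planar. -/
def IsOuterplanar {V : Type} (G : SimpleGraph V) : Prop :=
  IsPlanar (cone G)

/-- A cutvertex: its deletion disconnects the graph. -/
def IsCutVertex {V : Type} (G : SimpleGraph V) (v : V) : Prop :=
  ¬ ((⊤ : G.Subgraph).deleteVerts {v}).coe.Preconnected

/-- A graph is nonseparable when it is connected and has no cutvertex. -/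
def IsNonseparable {V : Type} (G : SimpleGraph V) : Prop :=
  G.Connected ∧ ∀ v : V, ¬ IsCutVertex G v

/-- A block: a maximal nonseparable subgraph. -/
def SimpleGraph.Subgraph.IsBlock {V : Type} {G : SimpleGraph V} (B : G.Subgraph) : Prop :=
  IsNonseparable B.coe ∧
    ∀ C : G.Subgraph, B ≤ C → IsNonseparable C.coe → C = B

/-- A separating triangle: a triangle whose removal disconnects the graph. -/
def SeparatingTriangle {V : Type} (G : SimpleGraph V) (a b c : V) : Prop :=
  G.Adj a b ∧ G.Adj b c ∧ G.Adj a c ∧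
    ¬ ((⊤ : G.Subgraph).deleteVerts {a, b, c}).coe.Preconnected

/-- A rotation system is a triangulation if every face has exactly three darts. -/
def IsTriangulation {V : Type} (G : SimpleGraph V) (ρ : Equiv.Perm G.Dart) : Prop :=
  ∀ d : G.Dart, facePerm G ρ (facePerm G ρ (facePerm G ρ d)) = d ∧ facePerm G ρ d ≠ d

/-- The triangle `a b c` bounds a face of the embedding `ρ`: the darts of one of its two
orientations form an orbit of the face-tracing permutation. -/
def TriBoundsFace {V : Type} (G : SimpleGraph V) (ρ : Equiv.Perm G.Dart) (a b c : V) : Prop :=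
  ∃ d₁ d₂ d₃ : G.Dart,
    facePerm G ρ d₁ = d₂ ∧ facePerm G ρ d₂ = d₃ ∧ facePerm G ρ d₃ = d₁ ∧
    ((d₁.toProd = (a, b) ∧ d₂.toProd = (b, c) ∧ d₃.toProd = (c, a)) ∨
     (d₁.toProd = (a, c) ∧ d₂.toProd = (c, b) ∧ d₃.toProd = (b, a)))

/-- Nicely planar: some plane embedding in which every triangle bounds a face. -/
def IsNicelyPlanar {V : Type} (G : SimpleGraph V) : Prop :=
  ∃ ρ : Equiv.Perm G.Dart, IsPlanarRotation G ρ ∧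
    ∀ a b c : V, G.Adj a b → G.Adj b c → G.Adj a c → TriBoundsFace G ρ a b c

/-- 3-connected: at least 4 vertices and connected after deleting any two vertices. -/
def IsThreeConnected {V : Type} (G : SimpleGraph V) : Prop :=
  4 ≤ Nat.card V ∧ ∀ a b : V, ((⊤ : G.Subgraph).deleteVerts {a, b}).coe.Connected


-- ## Auxiliary development

-- ## Part I : crossing combinatorics

def CrossN (a b c d : ℕ) : Prop :=
  (min a b < min c d ∧ min c d < max a b ∧ max a b < max c d) ∨
  (min c d < min a b ∧ min a b < max c d ∧ max c d < max a b)

lemma fin_val_min {n : ℕ} (a b : Fin n) : (min a b).1 = min a.1 b.1 := by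
  rcases le_total a b with h|h
  · rw [min_eq_left h, min_eq_left (Fin.le_def.mp h)]
  · rw [min_eq_right h, min_eq_right (Fin.le_def.mp h)]

lemma fin_val_max {n : ℕ} (a b : Fin n) : (max a b).1 = max a.1 b.1 := by
  rcases le_total a b with h|h
  · rw [max_eq_right h, max_eq_right (Fin.le_def.mp h)]
  · rw [max_eq_left h, max_eq_left (Fin.le_def.mp h)]

lemma cross'_iff_val {n : ℕ} (a b c d : Fin n) :
    Cross' a b c d ↔ CrossN a.1 b.1 c.1 d.1 := by
  simp only [Cross', Cross, CrossN, Fin.lt_def, fin_val_min, fin_val_max]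

set_option maxHeartbeats 4000000 in
lemma crossN_rot (n t A B C D FA FB FC FD : ℕ)
    (ht : t < n)
    (hFA : (A < t ∧ FA = A + n - t) ∨ (t ≤ A ∧ FA = A - t))
    (hFB : (B < t ∧ FB = B + n - t) ∨ (t ≤ B ∧ FB = B - t))
    (hFC : (C < t ∧ FC = C + n - t) ∨ (t ≤ C ∧ FC = C - t))
    (hFD : (D < t ∧ FD = D + n - t) ∨ (t ≤ D ∧ FD = D - t))
    (hA : A < n) (hB : B < n) (hC : C < n) (hD : D < n)
    (h : CrossN FA FB FC FD) : CrossN A B C D := by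
  unfold CrossN at h ⊢
  rcases hFA with ⟨h1,e1⟩|⟨h1,e1⟩ <;> rcases hFB with ⟨h2,e2⟩|⟨h2,e2⟩ <;>
    rcases hFC with ⟨h3,e3⟩|⟨h3,e3⟩ <;> rcases hFD with ⟨h4,e4⟩|⟨h4,e4⟩ <;>
    subst e1 <;> subst e2 <;> subst e3 <;> subst e4 <;> omega

lemma cross'_strictMono {n m : ℕ} {f : Fin n → Fin m} (hf : StrictMono f)
    (a b c d : Fin n) : Cross' (f a) (f b) (f c) (f d) ↔ Cross' a b c d := by
  simp only [Cross', Cross, ← hf.monotone.map_min, ← hf.monotone.map_max, hf.lt_iff_lt]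

lemma cross'_self {n : ℕ} (a b : Fin n) : ¬ Cross' a b a b := by
  rintro (⟨h,-⟩|⟨h,-⟩) <;> exact lt_irrefl _ h

lemma cross'_swap_right {n : ℕ} (a b c d : Fin n) : Cross' a b d c ↔ Cross' a b c d := by
  simp only [Cross', min_comm d c, max_comm d c]

-- ## monotonicity in pages

lemma hbe_mono {V : Type} {G : SimpleGraph V} {k k' : ℕ} (hk : k ≤ k')
    (h : HasBookEmbedding G k) : HasBookEmbedding G k' := by
  obtain ⟨n, ord, page, hcond⟩ := h
  exact ⟨n, ord, fun e => Fin.castLE hk (page e), fun a b c d hab hcd hp =>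
    hcond a b c d hab hcd (Fin.castLE_injective hk hp)⟩

-- ## restriction along injective adjacency-preserving maps

lemma hbe_of_map {V W : Type} {G : SimpleGraph V} {H : SimpleGraph W} {k : ℕ}
    (f : V → W) (hf : Function.Injective f) (hadj : ∀ a b, G.Adj a b → H.Adj (f a) (f b))
    (h : HasBookEmbedding H k) : HasBookEmbedding G k := by
  obtain ⟨n, ord, page, hcond⟩ := h
  refine ⟨n, ⟨fun v => ord (f v), fun x y hxy => hf (ord.injective hxy)⟩,
    fun e => page (e.map f), fun a b c d hab hcd hp => ?_⟩
  have := hcond (f a) (f b) (f c) (f d) (hadj _ _ hab) (hadj _ _ hcd) ?_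
  · exact this
  · simpa only [Sym2.map_pair_eq] using hp

lemma hbe_exists {V : Type} [Finite V] (G : SimpleGraph V) : ∃ k, HasBookEmbedding G k := by
  haveI := Fintype.ofFinite V
  haveI : Fintype (Sym2 V) := inferInstance
  refine ⟨Fintype.card (Sym2 V), Fintype.card V, (Fintype.equivFin V).toEmbedding,
    fun e => (Fintype.equivFin (Sym2 V)) e, fun a b c d hab hcd hp => ?_⟩
  have he : s(a,b) = s(c,d) := (Fintype.equivFin (Sym2 V)).injective hp
  rw [Sym2.eq_iff] at he
  rcases he with ⟨rfl, rfl⟩|⟨rfl, rfl⟩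
  · exact cross'_self _ _
  · rw [cross'_swap_right]; exact cross'_self _ _

lemma bt_mem {V : Type} [Finite V] (G : SimpleGraph V) :
    HasBookEmbedding G (bookThickness G) :=
  Nat.sInf_mem (hbe_exists G)

lemma bt_le {V : Type} {G : SimpleGraph V} {k : ℕ} (h : HasBookEmbedding G k) :
    bookThickness G ≤ k := Nat.sInf_le h

lemma bt_le_of_map {V W : Type} [Finite W] {G : SimpleGraph V} {H : SimpleGraph W}
    (f : V → W) (hf : Function.Injective f) (hadj : ∀ a b, G.Adj a b → H.Adj (f a) (f b)) :
    bookThickness G ≤ bookThickness H :=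
  bt_le (hbe_of_map f hf hadj (bt_mem H))

lemma bt_eq_of_iso {V W : Type} [Finite V] [Finite W] {G : SimpleGraph V} {H : SimpleGraph W}
    (e : G ≃g H) : bookThickness G = bookThickness H :=
  le_antisymm
    (bt_le_of_map e (e.toEquiv.injective) (fun a b h => e.map_adj_iff.mpr h))
    (bt_le_of_map e.symm (e.symm.toEquiv.injective) (fun a b h => e.symm.map_adj_iff.mpr h))

-- ## rotation

lemma hbe_rotate {V : Type} {G : SimpleGraph V} {k : ℕ} (h : HasBookEmbedding G k) (v : V) :
    ∃ (n : ℕ) (ord : V ↪ Fin n) (page : Sym2 V → Fin k),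
      (ord v).1 = 0 ∧
      ∀ a b c d : V, G.Adj a b → G.Adj c d → page s(a, b) = page s(c, d) →
        ¬ Cross' (ord a) (ord b) (ord c) (ord d) := by
  obtain ⟨n, ord, page, hcond⟩ := h
  set t := ord v with htdef
  have htn : t.1 < n := t.2
  set r : Fin n → Fin n := fun x =>
    ⟨if x.1 < t.1 then x.1 + n - t.1 else x.1 - t.1, by split_ifs with h' <;> omega⟩ with hr
  have hrinj : Function.Injective r := by
    intro x y hxy
    have hx := x.2; have hy := y.2
    have : (r x).1 = (r y).1 := congrArg Fin.val hxy
    simp only [hr] at this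
    split_ifs at this <;> [skip; skip; skip; skip] <;> exact Fin.ext (by omega)
  have hspec : ∀ x : Fin n, ((x.1 < t.1 ∧ (r x).1 = x.1 + n - t.1) ∨ (t.1 ≤ x.1 ∧ (r x).1 = x.1 - t.1)) := by
    intro x
    simp only [hr]
    split_ifs with h' <;> [exact Or.inl ⟨h', rfl⟩; exact Or.inr ⟨by omega, rfl⟩]
  refine ⟨n, ⟨fun u => r (ord u), fun x y hxy => ord.injective (hrinj hxy)⟩, page, ?_, ?_⟩
  · show (r t).1 = 0
    simp only [hr]
    rw [if_neg (lt_irrefl t.1)]; omega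
  · intro a b c d hab hcd hp hcr
    refine hcond a b c d hab hcd hp ?_
    rw [cross'_iff_val] at hcr ⊢
    exact crossN_rot n t.1 _ _ _ _ _ _ _ _ htn (hspec (ord a)) (hspec (ord b))
      (hspec (ord c)) (hspec (ord d)) (ord a).2 (ord b).2 (ord c).2 (ord d).2 hcr


lemma induce_adj' {V : Type} {G : SimpleGraph V} {s : Set V} {x y : ↑s} :
    (G.induce s).Adj x y ↔ G.Adj x y := by
  simp [SimpleGraph.induce, comap_adj]

lemma sym2_forall_mem {α : Type*} (P : α → Prop) (a b : α) :
    (∀ x ∈ s(a,b), P x) ↔ P a ∧ P b := by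
  constructor
  · intro h; exact ⟨h a (Sym2.mem_mk_left a b), h b (Sym2.mem_mk_right a b)⟩
  · rintro ⟨ha, hb⟩ x hx
    rcases Sym2.mem_iff.mp hx with rfl|rfl <;> assumption

lemma hbe_merge {V : Type} (G : SimpleGraph V) (A B : Set V) (v : V)
    (hA : v ∈ A) (hB : v ∈ B) (hcap : A ∩ B ⊆ {v}) (hcup : ∀ u, u ∈ A ∨ u ∈ B)
    (hedge : ∀ a b, G.Adj a b → (a ∈ A ∧ b ∈ A) ∨ (a ∈ B ∧ b ∈ B)) (k : ℕ)
    (h1 : HasBookEmbedding (G.induce A) k) (h2 : HasBookEmbedding (G.induce B) k) :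
    HasBookEmbedding G k := by
  classical
  obtain ⟨n₁, ord₁, page₁, hv₁, hc₁⟩ := hbe_rotate h1 ⟨v, hA⟩
  obtain ⟨n₂, ord₂, page₂, hv₂, hc₂⟩ := hbe_rotate h2 ⟨v, hB⟩
  have hn₁ : 0 < n₁ := Nat.pos_of_ne_zero (by intro h; have := (ord₁ ⟨v,hA⟩).2; omega)
  set ψ : Fin n₁ → Fin (n₁ + n₂) := Fin.castLE (Nat.le_add_right n₁ n₂) with hψ
  set φ : Fin n₂ → Fin (n₁ + n₂) := fun x =>
    if x.1 = 0 then ⟨0, by omega⟩ else ⟨n₁ + x.1 - 1, by have := x.2; omega⟩ with hφ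
  have hψval : ∀ x : Fin n₁, (ψ x).1 = x.1 := fun x => rfl
  have hφval : ∀ x : Fin n₂, (φ x).1 = if x.1 = 0 then 0 else n₁ + x.1 - 1 := by
    intro x; simp only [hφ]; split_ifs <;> rfl
  have hφmono : StrictMono φ := by
    intro x y hxy
    have hxy' : x.1 < y.1 := hxy
    have hy2 := y.2
    simp only [Fin.lt_def, hφval]
    split_ifs <;> omega
  set ordf : V → Fin (n₁ + n₂) := fun u =>
    if h : u ∈ A then ψ (ord₁ ⟨u, h⟩) else φ (ord₂ ⟨u, (hcup u).resolve_left h⟩) with hordf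
  have fA : ∀ (u : V) (hu : u ∈ A), ordf u = ψ (ord₁ ⟨u, hu⟩) := by
    intro u hu; simp only [hordf, dif_pos hu]
  have fB : ∀ (u : V) (hu : u ∈ B), ordf u = φ (ord₂ ⟨u, hu⟩) := by
    intro u hu
    by_cases h : u ∈ A
    · have huv : u = v := hcap ⟨h, hu⟩
      subst huv
      apply Fin.ext
      rw [fA u h, hψval]
      have e1 : ord₁ ⟨u, h⟩ = ord₁ ⟨u, hA⟩ := rfl
      have e2 : ord₂ ⟨u, hu⟩ = ord₂ ⟨u, hB⟩ := rfl
      rw [e1, hφval, e2, hv₂, if_pos rfl, hv₁]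
    · simp only [hordf, dif_neg h]
  have hvalA : ∀ (u : V) (hu : u ∈ A), (ordf u).1 < n₁ := by
    intro u hu; rw [fA u hu, hψval]; exact (ord₁ ⟨u, hu⟩).2
  have hvalB : ∀ (u : V) (hu : u ∈ B), (ordf u).1 = 0 ∨ n₁ ≤ (ordf u).1 := by
    intro u hu; rw [fB u hu, hφval]
    split_ifs with h
    · exact Or.inl rfl
    · right; omega
  have hinj : Function.Injective ordf := by
    intro x y hxy
    by_cases hx : x ∈ A <;> by_cases hy : y ∈ A
    · rw [fA x hx, fA y hy] at hxy
      have := ord₁.injective ((Fin.castLE_injective _) hxy)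
      exact congrArg Subtype.val this
    · exfalso
      have hyB : y ∈ B := (hcup y).resolve_left hy
      have h1' : (ordf x).1 < n₁ := hvalA x hx
      have hyv : y ≠ v := fun h => hy (h ▸ hA)
      have : (ord₂ ⟨y, hyB⟩).1 ≠ 0 := by
        intro h0
        have : ord₂ ⟨y, hyB⟩ = ord₂ ⟨v, hB⟩ := Fin.ext (by rw [h0, hv₂])
        exact hyv (congrArg Subtype.val (ord₂.injective this))
      have : n₁ ≤ (ordf y).1 := by rw [fB y hyB, hφval, if_neg this]; omega
      omega
    · exfalso
      have hxB : x ∈ B := (hcup x).resolve_left hx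
      have h1' : (ordf y).1 < n₁ := hvalA y hy
      have hxv : x ≠ v := fun h => hx (h ▸ hA)
      have : (ord₂ ⟨x, hxB⟩).1 ≠ 0 := by
        intro h0
        have : ord₂ ⟨x, hxB⟩ = ord₂ ⟨v, hB⟩ := Fin.ext (by rw [h0, hv₂])
        exact hxv (congrArg Subtype.val (ord₂.injective this))
      have : n₁ ≤ (ordf x).1 := by rw [fB x hxB, hφval, if_neg this]; omega
      omega
    · have hxB : x ∈ B := (hcup x).resolve_left hx
      have hyB : y ∈ B := (hcup y).resolve_left hy
      rw [fB x hxB, fB y hyB] at hxy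
      have := ord₂.injective (hφmono.injective hxy)
      exact congrArg Subtype.val this
  set ρA : V → ↑A := fun u => if h : u ∈ A then ⟨u, h⟩ else ⟨v, hA⟩ with hρA
  set ρB : V → ↑B := fun u => if h : u ∈ B then ⟨u, h⟩ else ⟨v, hB⟩ with hρB
  set page : Sym2 V → Fin k := fun e =>
    if (∀ x ∈ e, x ∈ A) then page₁ (e.map ρA) else page₂ (e.map ρB) with hpage
  refine ⟨n₁ + n₂, ⟨ordf, hinj⟩, page, ?_⟩
  intro a b c d hab hcd hp hcross
  simp only [Function.Embedding.coeFn_mk] at hcross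
  by_cases cab : a ∈ A ∧ b ∈ A <;> by_cases ccd : c ∈ A ∧ d ∈ A
  · -- both edges inside A
    have hpa : (∀ x ∈ s(a,b), x ∈ A) := (sym2_forall_mem _ a b).mpr cab
    have hpc : (∀ x ∈ s(c,d), x ∈ A) := (sym2_forall_mem _ c d).mpr ccd
    rw [hpage] at hp
    simp only [if_pos hpa, if_pos hpc, Sym2.map_pair_eq] at hp
    have eA : ρA a = ⟨a, cab.1⟩ := dif_pos cab.1
    have eB : ρA b = ⟨b, cab.2⟩ := dif_pos cab.2
    have eC : ρA c = ⟨c, ccd.1⟩ := dif_pos ccd.1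
    have eD : ρA d = ⟨d, ccd.2⟩ := dif_pos ccd.2
    rw [eA, eB, eC, eD] at hp
    refine hc₁ ⟨a, cab.1⟩ ⟨b, cab.2⟩ ⟨c, ccd.1⟩ ⟨d, ccd.2⟩
      (induce_adj'.mpr hab) (induce_adj'.mpr hcd) hp ?_
    rw [fA a cab.1, fA b cab.2, fA c ccd.1, fA d ccd.2] at hcross
    exact (cross'_strictMono (Fin.strictMono_castLE _) _ _ _ _).mp hcross
  · -- (a,b) in A, (c,d) in B : geometric
    obtain ⟨hcB, hdB⟩ := (hedge c d hcd).resolve_left ccd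
    have h1' := hvalA a cab.1
    have h2' := hvalA b cab.2
    have h3' := hvalB c hcB
    have h4' := hvalB d hdB
    rw [cross'_iff_val] at hcross
    unfold CrossN at hcross
    omega
  · -- (a,b) in B, (c,d) in A : geometric
    obtain ⟨haB, hbB⟩ := (hedge a b hab).resolve_left cab
    have h1' := hvalB a haB
    have h2' := hvalB b hbB
    have h3' := hvalA c ccd.1
    have h4' := hvalA d ccd.2
    rw [cross'_iff_val] at hcross
    unfold CrossN at hcross
    omega
  · -- both edges inside B
    obtain ⟨haB, hbB⟩ := (hedge a b hab).resolve_left cab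
    obtain ⟨hcB, hdB⟩ := (hedge c d hcd).resolve_left ccd
    have hpa : ¬ (∀ x ∈ s(a,b), x ∈ A) := fun h => cab ((sym2_forall_mem _ a b).mp h)
    have hpc : ¬ (∀ x ∈ s(c,d), x ∈ A) := fun h => ccd ((sym2_forall_mem _ c d).mp h)
    rw [hpage] at hp
    simp only [if_neg hpa, if_neg hpc, Sym2.map_pair_eq] at hp
    have eA : ρB a = ⟨a, haB⟩ := dif_pos haB
    have eB : ρB b = ⟨b, hbB⟩ := dif_pos hbB
    have eC : ρB c = ⟨c, hcB⟩ := dif_pos hcB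
    have eD : ρB d = ⟨d, hdB⟩ := dif_pos hdB
    rw [eA, eB, eC, eD] at hp
    refine hc₂ ⟨a, haB⟩ ⟨b, hbB⟩ ⟨c, hcB⟩ ⟨d, hdB⟩
      (induce_adj'.mpr hab) (induce_adj'.mpr hcd) hp ?_
    rw [fB a haB, fB b hbB, fB c hcB, fB d hdB] at hcross
    exact (cross'_strictMono hφmono _ _ _ _).mp hcross


-- ## iso invariance

lemma precon_of_iso {V W : Type} {G : SimpleGraph V} {H : SimpleGraph W} (e : G ≃g H)
    (h : G.Preconnected) : H.Preconnected := by
  intro x y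
  have := (h (e.symm x) (e.symm y)).map e.toHom
  simpa using this

lemma conn_of_iso {V W : Type} {G : SimpleGraph V} {H : SimpleGraph W} (e : G ≃g H)
    (h : G.Connected) : H.Connected :=
  (connected_iff H).mpr ⟨precon_of_iso e h.preconnected, ⟨e h.nonempty.some⟩⟩

def deleteIso {V W : Type} {G : SimpleGraph V} {H : SimpleGraph W} (e : G ≃g H) (v : V) :
    ((⊤ : G.Subgraph).deleteVerts {v}).coe ≃g ((⊤ : H.Subgraph).deleteVerts {e v}).coe where
  toEquiv := e.toEquiv.subtypeEquiv (by
    intro a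
    simp only [Subgraph.deleteVerts_verts, Subgraph.verts_top, Set.mem_diff, Set.mem_univ,
      Set.mem_singleton_iff, true_and]
    exact (not_congr (EmbeddingLike.apply_eq_iff_eq _)).symm)
  map_rel_iff' := by
    rintro ⟨a, ha⟩ ⟨b, hb⟩
    have ha' : a ≠ v := by
      rw [Subgraph.deleteVerts_verts] at ha; exact fun h => ha.2 (by simp [h])
    have hb' : b ≠ v := by
      rw [Subgraph.deleteVerts_verts] at hb; exact fun h => hb.2 (by simp [h])
    simp only [Equiv.toFun_as_coe, Equiv.subtypeEquiv_apply, Subgraph.coe_adj,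
      Subgraph.deleteVerts_adj, Subgraph.top_adj, Subgraph.verts_top, Set.mem_univ,
      Set.mem_singleton_iff, true_and]
    constructor
    · rintro ⟨-, -, h⟩
      exact ⟨ha', hb', e.map_adj_iff.mp h⟩
    · rintro ⟨-, -, h⟩
      exact ⟨fun hh => ha' (e.toEquiv.injective hh), fun hh => hb' (e.toEquiv.injective hh),
        e.map_adj_iff.mpr h⟩

lemma nonsep_of_iso {V W : Type} {G : SimpleGraph V} {H : SimpleGraph W} (e : G ≃g H)
    (h : IsNonseparable G) : IsNonseparable H := by
  refine ⟨conn_of_iso e h.1, fun w hcut => h.2 (e.symm w) fun hpre => hcut ?_⟩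
  have iso := deleteIso e (e.symm w)
  rw [e.apply_symm_apply] at iso
  exact precon_of_iso iso hpre

-- ## subsingleton graphs

lemma precon_of_subsingleton {V : Type} [Subsingleton V] (G : SimpleGraph V) :
    G.Preconnected := fun x y => by rw [Subsingleton.elim x y]

lemma singleton_nonsep {V : Type} (G : SimpleGraph V) (v : V) :
    IsNonseparable (G.singletonSubgraph v).coe := by
  haveI : Subsingleton ↑(G.singletonSubgraph v).verts := by
    constructor
    rintro ⟨x, hx⟩ ⟨y, hy⟩
    simp only [singletonSubgraph_verts, Set.mem_singleton_iff] at hx hy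
    exact Subtype.ext (hx.trans hy.symm)
  refine ⟨(connected_iff _).mpr ⟨precon_of_subsingleton _, ⟨⟨v, rfl⟩⟩⟩, fun u hcut => hcut ?_⟩
  haveI : Subsingleton ↑((⊤ : (G.singletonSubgraph v).coe.Subgraph).deleteVerts {u}).verts :=
    ⟨fun a b => Subtype.ext (Subsingleton.elim _ _)⟩
  exact precon_of_subsingleton _

-- ## side connectivity

lemma induce_connected_of_closed {V : Type} {G : SimpleGraph V} (hpre : G.Preconnected)
    (S : Set V) (v : V) (hv : v ∈ S)
    (hclosed : ∀ x y, G.Adj x y → x ∈ S → x ≠ v → y ∈ S) : (G.induce S).Connected := by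
  have key : ∀ (u z : V) (w : G.Walk u z), z = v → ∀ (hu : u ∈ S),
      (G.induce S).Reachable ⟨u, hu⟩ ⟨v, hv⟩ := by
    intro u z w
    induction w with
    | @nil u =>
      intro hz hu
      rw [show (⟨u, hu⟩ : ↑S) = ⟨v, hv⟩ from Subtype.ext hz]
    | @cons u x z h p ih =>
      intro hz hu
      by_cases he : u = v
      · rw [show (⟨u, hu⟩ : ↑S) = ⟨v, hv⟩ from Subtype.ext he]
      · have hx : x ∈ S := hclosed u x h hu he
        exact (Adj.reachable (induce_adj'.mpr h :
          (G.induce S).Adj ⟨u, hu⟩ ⟨x, hx⟩)).trans (ih hz hx)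
  refine (connected_iff _).mpr ⟨fun x y => ?_, ⟨⟨v, hv⟩⟩⟩
  obtain ⟨wx⟩ := hpre x.1 v
  obtain ⟨wy⟩ := hpre y.1 v
  exact (key x.1 v wx rfl x.2).trans (key y.1 v wy rfl y.2).symm

-- ## pushforward of subgraphs of induced graphs

def pushSub {V : Type} (G : SimpleGraph V) (A : Set V) (B : (G.induce A).Subgraph) :
    G.Subgraph where
  verts := Subtype.val '' B.verts
  Adj x y := ∃ (hx : x ∈ A) (hy : y ∈ A), B.Adj ⟨x, hx⟩ ⟨y, hy⟩
  adj_sub := by rintro x y ⟨hx, hy, h⟩; exact induce_adj'.mp (B.adj_sub h)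
  edge_vert := by rintro x y ⟨hx, hy, h⟩; exact ⟨⟨x, hx⟩, B.edge_vert h, rfl⟩
  symm := ⟨by rintro x y ⟨hx, hy, h⟩; exact ⟨hy, hx, B.adj_symm h⟩⟩

noncomputable def pushIso {V : Type} (G : SimpleGraph V) (A : Set V)
    (B : (G.induce A).Subgraph) : B.coe ≃g (pushSub G A B).coe where
  toEquiv := Equiv.Set.image Subtype.val B.verts Subtype.val_injective
  map_rel_iff' := by
    intro a b
    constructor
    · rintro ⟨hx, hy, h⟩
      exact h
    · intro h
      exact ⟨a.1.2, b.1.2, h⟩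


instance subgraphFinite {V : Type} [Finite V] (G : SimpleGraph V) : Finite G.Subgraph :=
  Finite.of_injective (fun B => (B.verts, B.Adj))
    (fun B C h => Subgraph.ext (congrArg Prod.fst h) (congrArg Prod.snd h))

lemma bt_coe_le {V : Type} [Finite V] {G : SimpleGraph V} (B : G.Subgraph) :
    bookThickness B.coe ≤ bookThickness G :=
  bt_le_of_map Subtype.val Subtype.val_injective (fun _ _ h => B.adj_sub h)

lemma bt_coe_mono {V : Type} [Finite V] {G : SimpleGraph V} {B C : G.Subgraph} (h : B ≤ C) :
    bookThickness B.coe ≤ bookThickness C.coe :=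
  bt_le_of_map (Set.inclusion h.1)
    (Set.inclusion_injective h.1)
    (fun a b hab => (show ∀ x y, B.Adj x y → C.Adj x y from h.2) a.1 b.1 hab)

lemma exists_block_ge {V : Type} [Finite V] {G : SimpleGraph V} (B : G.Subgraph)
    (hB : IsNonseparable B.coe) : ∃ C : G.Subgraph, B ≤ C ∧ C.IsBlock := by
  obtain ⟨C, ⟨hBC, hCns⟩, hmax⟩ := Set.Finite.exists_maximalFor id
    {C : G.Subgraph | B ≤ C ∧ IsNonseparable C.coe} (Set.toFinite _) ⟨B, le_refl B, hB⟩
  exact ⟨C, hBC, hCns, fun D hCD hDns => le_antisymm (hmax ⟨hBC.trans hCD, hDns⟩ hCD) hCD⟩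

-- the set of book thicknesses of nonseparable subgraphs
lemma ns_nonempty {V : Type} {G : SimpleGraph V} (u : V) :
    {n : ℕ | ∃ B : G.Subgraph, IsNonseparable B.coe ∧ bookThickness B.coe = n}.Nonempty :=
  ⟨_, G.singletonSubgraph u, singleton_nonsep G u, rfl⟩

theorem thmA (N : ℕ) : ∀ (V : Type) [Finite V] (G : SimpleGraph V), Nat.card V ≤ N →
    G.Connected →
    bookThickness G =
      sSup {n : ℕ | ∃ B : G.Subgraph, IsNonseparable B.coe ∧ bookThickness B.coe = n} := by
  induction N with
  | zero =>
    intro V _ G hcard hG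
    haveI := hG.nonempty
    have := Nat.card_pos (α := V)
    omega
  | succ N ih =>
    intro V _ G hcard hG
    set S := {n : ℕ | ∃ B : G.Subgraph, IsNonseparable B.coe ∧ bookThickness B.coe = n} with hS
    have hbdd : BddAbove S := ⟨bookThickness G, by rintro n ⟨B, hB, rfl⟩; exact bt_coe_le B⟩
    have hne : S.Nonempty := ns_nonempty hG.nonempty.some
    have hupper : sSup S ≤ bookThickness G :=
      csSup_le hne (by rintro n ⟨B, hB, rfl⟩; exact bt_coe_le B)
    refine le_antisymm ?_ hupper
    by_cases hcut : ∃ v, IsCutVertex G v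
    · obtain ⟨v, hv⟩ := hcut
      rw [IsCutVertex, SimpleGraph.Preconnected] at hv
      push_neg at hv
      obtain ⟨a, b, hab⟩ := hv
      -- the two sides
      set D := ((⊤ : G.Subgraph).deleteVerts {v}).coe with hD
      have hnotv : ∀ x : ↑((⊤ : G.Subgraph).deleteVerts {v}).verts, (x : V) ≠ v := by
        intro x hx
        exact x.2.2 (by simp [hx])
      have hmemD : ∀ x : V, x ≠ v → x ∈ ((⊤ : G.Subgraph).deleteVerts {v}).verts := by
        intro x hx
        exact ⟨trivial, by simpa using hx⟩
      have hDadj : ∀ x y : ↑((⊤ : G.Subgraph).deleteVerts {v}).verts,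
          D.Adj x y ↔ G.Adj x y := by
        intro x y
        rw [hD]
        simp only [Subgraph.coe_adj, Subgraph.deleteVerts_adj, Subgraph.verts_top,
          Subgraph.top_adj, Set.mem_univ, Set.mem_singleton_iff, true_and]
        constructor
        · rintro ⟨-, -, h⟩; exact h
        · intro h; exact ⟨by simpa using hnotv x, by simpa using hnotv y, h⟩
      set A : Set V := insert v (Subtype.val '' {u | D.Reachable a u}) with hAdef
      set B : Set V := insert v (Subtype.val '' {u | ¬ D.Reachable a u}) with hBdef
      have hvA : v ∈ A := Set.mem_insert _ _
      have hvB : v ∈ B := Set.mem_insert _ _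
      -- membership characterizations
      have hmemA : ∀ x : V, x ≠ v → (x ∈ A ↔ ∃ hx : x ∈ _, D.Reachable a ⟨x, hx⟩) := by
        intro x hx
        constructor
        · rintro (rfl | ⟨u, hu, rfl⟩)
          · exact absurd rfl hx
          · exact ⟨u.2, hu⟩
        · rintro ⟨hx', hr⟩
          exact Set.mem_insert_iff.mpr (Or.inr ⟨⟨x, hx'⟩, hr, rfl⟩)
      have hmemB : ∀ x : V, x ≠ v → (x ∈ B ↔ ∃ hx : x ∈ _, ¬ D.Reachable a ⟨x, hx⟩) := by
        intro x hx
        constructor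
        · rintro (rfl | ⟨u, hu, rfl⟩)
          · exact absurd rfl hx
          · exact ⟨u.2, hu⟩
        · rintro ⟨hx', hr⟩
          exact Set.mem_insert_iff.mpr (Or.inr ⟨⟨x, hx'⟩, hr, rfl⟩)
      have hcup : ∀ u : V, u ∈ A ∨ u ∈ B := by
        intro u
        by_cases hu : u = v
        · exact Or.inl (hu ▸ hvA)
        · by_cases hr : D.Reachable a ⟨u, hmemD u hu⟩
          · exact Or.inl ((hmemA u hu).mpr ⟨_, hr⟩)
          · exact Or.inr ((hmemB u hu).mpr ⟨_, hr⟩)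
      have hcap : A ∩ B ⊆ {v} := by
        rintro u ⟨huA, huB⟩
        by_contra hu
        simp only [Set.mem_singleton_iff] at hu
        obtain ⟨h1, hr1⟩ := (hmemA u hu).mp huA
        obtain ⟨h2, hr2⟩ := (hmemB u hu).mp huB
        exact hr2 hr1
      have hedge : ∀ x y, G.Adj x y → (x ∈ A ∧ y ∈ A) ∨ (x ∈ B ∧ y ∈ B) := by
        intro x y hxy
        by_cases hx : x = v
        · subst hx
          rcases hcup y with hy | hy
          · exact Or.inl ⟨hvA, hy⟩
          · exact Or.inr ⟨hvB, hy⟩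
        by_cases hy : y = v
        · subst hy
          rcases hcup x with hx' | hx'
          · exact Or.inl ⟨hx', hvA⟩
          · exact Or.inr ⟨hx', hvB⟩
        have hadj : D.Adj ⟨x, hmemD x hx⟩ ⟨y, hmemD y hy⟩ := (hDadj _ _).mpr hxy
        by_cases hr : D.Reachable a ⟨x, hmemD x hx⟩
        · exact Or.inl ⟨(hmemA x hx).mpr ⟨hmemD x hx, hr⟩,
            (hmemA y hy).mpr ⟨hmemD y hy, hr.trans hadj.reachable⟩⟩
        · refine Or.inr ⟨(hmemB x hx).mpr ⟨hmemD x hx, hr⟩,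
            (hmemB y hy).mpr ⟨hmemD y hy, fun hr' => hr ?_⟩⟩
          exact hr'.trans hadj.symm.reachable
      -- closure properties
      have hclosedA : ∀ x y, G.Adj x y → x ∈ A → x ≠ v → y ∈ A := by
        intro x y hxy hxA hxv
        rcases hedge x y hxy with ⟨-, hy⟩ | ⟨hxB, -⟩
        · exact hy
        · obtain ⟨h1, hr1⟩ := (hmemA x hxv).mp hxA
          obtain ⟨h2, hr2⟩ := (hmemB x hxv).mp hxB
          exact absurd hr1 hr2
      have hclosedB : ∀ x y, G.Adj x y → x ∈ B → x ≠ v → y ∈ B := by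
        intro x y hxy hxB hxv
        rcases hedge x y hxy with ⟨hxA, -⟩ | ⟨-, hy⟩
        · obtain ⟨h1, hr1⟩ := (hmemA x hxv).mp hxA
          obtain ⟨h2, hr2⟩ := (hmemB x hxv).mp hxB
          exact absurd hr1 hr2
        · exact hy
      -- connectivity of the sides
      have connA : (G.induce A).Connected :=
        induce_connected_of_closed hG.preconnected A v hvA hclosedA
      have connB : (G.induce B).Connected :=
        induce_connected_of_closed hG.preconnected B v hvB hclosedB
      -- cardinalities
      have hbA : (b : V) ∉ A := by
        intro hmem
        obtain ⟨h1, hr1⟩ := (hmemA b (hnotv b)).mp hmem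
        exact hab (by convert hr1 using 2)
      have haB : (a : V) ∉ B := by
        intro hmem
        obtain ⟨h1, hr1⟩ := (hmemB a (hnotv a)).mp hmem
        exact hr1 (by convert Reachable.refl a using 2)
      have hcardA : Nat.card ↑A < Nat.card V := by
        rw [Nat.card_coe_set_eq, ← Set.ncard_univ]
        exact Set.ncard_lt_ncard ⟨Set.subset_univ A, fun hall => hbA (hall trivial)⟩
          Set.finite_univ
      have hcardB : Nat.card ↑B < Nat.card V := by
        rw [Nat.card_coe_set_eq, ← Set.ncard_univ]
        exact Set.ncard_lt_ncard ⟨Set.subset_univ B, fun hall => haB (hall trivial)⟩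
          Set.finite_univ
      -- induction hypotheses
      have ihA := ih ↑A (G.induce A) (by omega) connA
      have ihB := ih ↑B (G.induce B) (by omega) connB
      -- merge
      set k := max (bookThickness (G.induce A)) (bookThickness (G.induce B)) with hk
      have hbeG : HasBookEmbedding G k :=
        hbe_merge G A B v hvA hvB hcap hcup hedge k
          (hbe_mono (le_max_left _ _) (bt_mem _)) (hbe_mono (le_max_right _ _) (bt_mem _))
      refine (bt_le hbeG).trans (max_le ?_ ?_)
      · rw [ihA]
        refine csSup_le (ns_nonempty ⟨v, hvA⟩) ?_
        rintro n ⟨B', hB', rfl⟩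
        refine le_csSup hbdd ⟨pushSub G A B', nonsep_of_iso (pushIso G A B') hB',
          (bt_eq_of_iso (pushIso G A B')).symm⟩
      · rw [ihB]
        refine csSup_le (ns_nonempty ⟨v, hvB⟩) ?_
        rintro n ⟨B', hB', rfl⟩
        refine le_csSup hbdd ⟨pushSub G B B', nonsep_of_iso (pushIso G B B') hB',
          (bt_eq_of_iso (pushIso G B B')).symm⟩
    · push_neg at hcut
      have hns : IsNonseparable (⊤ : G.Subgraph).coe :=
        nonsep_of_iso (Subgraph.topIso (G := G)).symm ⟨hG, hcut⟩
      exact le_csSup hbdd ⟨⊤, hns, bt_eq_of_iso Subgraph.topIso⟩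

/-- The book thickness of a finite connected graph equals the maximum of the
book thicknesses of its blocks. -/
theorem bookThickness_eq_sSup_blocks {V : Type} [Fintype V] (G : SimpleGraph V)
    (hG : G.Connected) :
    bookThickness G =
      sSup {n : ℕ | ∃ B : G.Subgraph, B.IsBlock ∧ bookThickness B.coe = n} := by
  haveI : Finite V := Finite.of_fintype V
  rw [thmA (Nat.card V) V G le_rfl hG]
  set NS := {n : ℕ | ∃ B : G.Subgraph, IsNonseparable B.coe ∧ bookThickness B.coe = n} with hNS
  set BL := {n : ℕ | ∃ B : G.Subgraph, B.IsBlock ∧ bookThickness B.coe = n} with hBL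
  have hbddNS : BddAbove NS := ⟨bookThickness G, by rintro n ⟨B, hB, rfl⟩; exact bt_coe_le B⟩
  have hbddBL : BddAbove BL := ⟨bookThickness G, by rintro n ⟨B, hB, rfl⟩; exact bt_coe_le B⟩
  have hneBL : BL.Nonempty := by
    obtain ⟨C, -, hC⟩ := exists_block_ge (G.singletonSubgraph hG.nonempty.some)
      (singleton_nonsep G hG.nonempty.some)
    exact ⟨_, C, hC, rfl⟩
  apply le_antisymm
  · refine csSup_le (ns_nonempty hG.nonempty.some) ?_
    rintro n ⟨B, hB, rfl⟩
    obtain ⟨C, hBC, hCbl⟩ := exists_block_ge B hB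
    exact (bt_coe_mono hBC).trans (le_csSup hbddBL ⟨C, hCbl, rfl⟩)
  · refine csSup_le hneBL ?_
    rintro n ⟨B, hB, rfl⟩
    exact le_csSup hbddNS ⟨B, hB.1, rfl⟩
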